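/- For ω, ω₀ > 0 and f ∈ ℝ, the sequence ξ ∈ l²(ℤ) defined by ξ_k = (1/π) ∫_{−π/2}^{π/2} f·cos(2kφ) / (4ω² sin²φ + ω₀²) dφ satisfies the equations ω²(ξ_{k+1} − 2ξ_k + ξ_{k−1}) − ω₀² ξ_k + f δ_{k,0} = 0 for all k ∈ ℤ. -/

import Mathlib

open Real

/-- The sequence `ξ_k = (1/π) ∫_{−π/2}^{π/2} f cos(2kφ)/(4ω² sin²φ + ω₀²) dφ`
solves `ω²(ξ_{k+1} − 2ξ_k + ξ_{k−1}) − ω₀² ξ_k + f δ_{k,0} = 0` for every `k ∈ ℤ`. -/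
theorem stmt_1 (ω ω₀ f : ℝ) (hω : 0 < ω) (hω₀ : 0 < ω₀)
    (ξ : ℤ → ℝ)
    (hξ : ∀ k : ℤ, ξ k =
      (1 / π) * ∫ φ in (-(π / 2))..(π / 2),
        f * Real.cos (2 * (k : ℝ) * φ) / (4 * ω ^ 2 * Real.sin φ ^ 2 + ω₀ ^ 2)) :
    ∀ k : ℤ, ω ^ 2 * (ξ (k + 1) - 2 * ξ k + ξ (k - 1)) - ω₀ ^ 2 * ξ k
      + f * (if k = 0 then 1 else 0) = 0 := by
  intro k
  have hD : ∀ φ : ℝ, 4 * ω ^ 2 * Real.sin φ ^ 2 + ω₀ ^ 2 ≠ 0 := by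
    intro φ
    have h1 : 0 ≤ 4 * ω ^ 2 * Real.sin φ ^ 2 := by positivity
    nlinarith
  set g : ℤ → ℝ → ℝ := fun m φ =>
    f * Real.cos (2 * (m : ℝ) * φ) / (4 * ω ^ 2 * Real.sin φ ^ 2 + ω₀ ^ 2) with hg
  have hint : ∀ m : ℤ, IntervalIntegrable (g m) MeasureTheory.volume (-(π/2)) (π/2) := by
    intro m
    apply Continuous.intervalIntegrable
    exact (continuous_const.mul (Real.continuous_cos.comp (by fun_prop))).div (by fun_prop)
      (fun φ => hD φ)
  set I : ℤ → ℝ := fun m => ∫ φ in (-(π/2))..(π/2), g m φ with hI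
  have hξ' : ∀ m : ℤ, ξ m = (1 / π) * I m := fun m => hξ m
  have key : ω ^ 2 * (I (k+1) - 2 * I k + I (k-1)) - ω₀ ^ 2 * I k
      = ∫ φ in (-(π/2))..(π/2), -(f * Real.cos (2 * (k:ℝ) * φ)) := by
    have comb : ∀ φ : ℝ,
        ω ^ 2 * (g (k+1) φ - 2 * g k φ + g (k-1) φ) - ω₀ ^ 2 * g k φ
          = -(f * Real.cos (2 * (k:ℝ) * φ)) := by
      intro φ
      have hc1 : Real.cos (2 * ((k:ℝ)+1) * φ)
          = Real.cos (2*(k:ℝ)*φ) * Real.cos (2*φ) - Real.sin (2*(k:ℝ)*φ) * Real.sin (2*φ) := by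
        rw [show 2 * ((k:ℝ)+1) * φ = 2*(k:ℝ)*φ + 2*φ by ring, Real.cos_add]
      have hc2 : Real.cos (2 * ((k:ℝ)-1) * φ)
          = Real.cos (2*(k:ℝ)*φ) * Real.cos (2*φ) + Real.sin (2*(k:ℝ)*φ) * Real.sin (2*φ) := by
        rw [show 2 * ((k:ℝ)-1) * φ = 2*(k:ℝ)*φ - 2*φ by ring, Real.cos_sub]
      have hc3 : Real.cos (2*φ) = 1 - 2 * Real.sin φ ^ 2 := by
        have := Real.sin_sq_add_cos_sq φ
        rw [Real.cos_two_mul]; nlinarith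
      simp only [hg]
      push_cast
      rw [hc1, hc2, hc3]
      field_simp
      ring
    calc ω ^ 2 * (I (k+1) - 2 * I k + I (k-1)) - ω₀ ^ 2 * I k
        = ∫ φ in (-(π/2))..(π/2),
            (ω ^ 2 * (g (k+1) φ - 2 * g k φ + g (k-1) φ) - ω₀ ^ 2 * g k φ) := by
          rw [hI]
          rw [intervalIntegral.integral_sub (((((hint (k+1)).sub ((hint k).const_mul 2)).add
                (hint (k-1))).const_mul (ω ^ 2))) ((hint k).const_mul (ω₀ ^ 2)),
              intervalIntegral.integral_const_mul, intervalIntegral.integral_const_mul,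
              intervalIntegral.integral_add ((hint (k+1)).sub ((hint k).const_mul 2)) (hint (k-1)),
              intervalIntegral.integral_sub (hint (k+1)) ((hint k).const_mul 2),
              intervalIntegral.integral_const_mul]
      _ = ∫ φ in (-(π/2))..(π/2), -(f * Real.cos (2 * (k:ℝ) * φ)) := by
          exact intervalIntegral.integral_congr (fun φ _ => comb φ)
  have hJ : (∫ φ in (-(π/2))..(π/2), f * Real.cos (2 * (k:ℝ) * φ))
      = f * (if k = 0 then 1 else 0) * π := by
    rcases eq_or_ne k 0 with hk | hk
    · subst hk
      simp
      ring
    · have hk' : (2 * (k:ℝ)) ≠ 0 := by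
        simp [hk]
      rw [intervalIntegral.integral_const_mul]
      have := intervalIntegral.mul_integral_comp_mul_left (c := 2 * (k:ℝ))
        (f := Real.cos) (a := -(π/2)) (b := π/2)
      have h2 : (∫ φ in (-(π/2))..(π/2), Real.cos (2 * (k:ℝ) * φ))
          = (2 * (k:ℝ))⁻¹ * ∫ x in (2 * (k:ℝ) * (-(π/2)))..(2 * (k:ℝ) * (π/2)), Real.cos x := by
        field_simp at this ⊢
        try linarith [this]
      rw [h2, integral_cos]
      have hs1 : Real.sin (2 * (k:ℝ) * (π/2)) = 0 := by
        rw [show 2 * (k:ℝ) * (π/2) = (k:ℝ) * π by ring]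
        exact Real.sin_int_mul_pi k
      have hs2 : Real.sin (2 * (k:ℝ) * (-(π/2))) = 0 := by
        rw [show 2 * (k:ℝ) * (-(π/2)) = ((-k : ℤ):ℝ) * π by push_cast; ring]
        exact Real.sin_int_mul_pi (-k)
      simp [hs1, hs2, hk]
  rw [hξ' (k+1), hξ' k, hξ' (k-1)]
  have hπ : π ≠ 0 := Real.pi_ne_zero
  have : ω ^ 2 * (1/π * I (k+1) - 2 * (1/π * I k) + 1/π * I (k-1)) - ω₀ ^ 2 * (1/π * I k)
      = (1/π) * (ω ^ 2 * (I (k+1) - 2 * I k + I (k-1)) - ω₀ ^ 2 * I k) := by ring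
  rw [this, key, intervalIntegral.integral_neg, hJ]
  field_simp
  ring
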